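/- Let X be a compact metric space, G a group of homeomorphisms of X, and H a normal subgroup of G. The set of invertible elements of the monoid closure(G)/closure(H) (cosets closure(fH), f ∈ closure(G), with product closure(fH)*closure(pH) = closure(fpH)) forms a topological group in which inversion is continuous, and this group is completely metrizable via D'(closure(fH), closure(gH)) = D(closure(fH), closure(gH)) + D(closure(fH)⁻¹, closure(gH)⁻¹), where D is the Hausdorff metric. -/

import Mathlib

open EMetric
open scoped ENNReal NNReal

section Stmt10Aux

variable {X : Type*} [MetricSpace X] [CompactSpace X]

lemma stmt10_hd_eq {α : Type*} [PseudoEMetricSpace α] {s t : Set α} :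
    hausdorffEdist s t = Metric.hausdorffEDist s t := rfl

lemma stmt10_ie_eq {α : Type*} [PseudoEMetricSpace α] {x : α} {s : Set α} :
    infEdist x s = Metric.infEDist x s := rfl

/-- The raw coset `f ∘ H` inside `C(X, X)`. -/
def stmt10cs (H : Set (X ≃ₜ X)) (f : C(X, X)) : Set C(X, X) :=
  {q : C(X, X) | ∃ h ∈ H, q = f.comp (h : C(X, X))}

/-- The group `G` viewed as a subset of `C(X, X)`. -/
def stmt10gs (G : Set (X ≃ₜ X)) : Set C(X, X) :=
  {q : C(X, X) | ∃ g ∈ G, q = (g : C(X, X))}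

lemma stmt10_ennreal_le_of_forall {a b : ℝ≥0∞}
    (h : ∀ ε : ℝ, 0 < ε → a ≤ b + ENNReal.ofReal ε) : a ≤ b := by
  refine ENNReal.le_of_forall_pos_le_add fun ε hε _ => ?_
  simpa [ENNReal.ofReal_coe_nnreal] using h ε (by exact_mod_cast hε)

lemma stmt10_eq_zero_of_forall {a : ℝ≥0∞}
    (h : ∀ ε : ℝ, 0 < ε → a ≤ ENNReal.ofReal ε) : a = 0 := by
  refine le_antisymm (stmt10_ennreal_le_of_forall fun ε hε => ?_) zero_le
  rw [zero_add]; exact h ε hε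

lemma stmt10_dist_comp_right (u v q : C(X, X)) :
    dist (u.comp q) (v.comp q) ≤ dist u v := by
  refine (ContinuousMap.dist_le dist_nonneg).2 fun x => ?_
  simp only [ContinuousMap.comp_apply]
  exact ContinuousMap.dist_apply_le_dist _

lemma stmt10_edist_comp_right (u v q : C(X, X)) :
    edist (u.comp q) (v.comp q) ≤ edist u v := by
  rw [edist_dist, edist_dist]
  exact ENNReal.ofReal_le_ofReal (stmt10_dist_comp_right u v q)

lemma stmt10_unif (p : C(X, X)) {ε : ℝ} (hε : 0 < ε) :
    ∃ δ > 0, ∀ a b : X, dist a b < δ → dist (p a) (p b) < ε := by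
  obtain ⟨δ, hδ, h⟩ := Metric.uniformContinuous_iff.1
    (CompactSpace.uniformContinuous_of_continuous p.continuous) ε hε
  exact ⟨δ, hδ, fun a b hab => h hab⟩

variable {G H : Set (X ≃ₜ X)}

lemma stmt10_infEdist_cs_le (u v : C(X, X)) {x : C(X, X)} (hx : x ∈ stmt10cs H u) :
    infEdist x (stmt10cs H v) ≤ edist u v := by
  obtain ⟨h, hh, rfl⟩ := hx
  have hmem : v.comp (h : C(X, X)) ∈ stmt10cs H v := ⟨h, hh, rfl⟩
  exact (infEdist_le_edist_of_mem hmem).trans (stmt10_edist_comp_right u v _)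

lemma stmt10_hd_cs_le_edist (u v : C(X, X)) :
    hausdorffEdist (stmt10cs H u) (stmt10cs H v) ≤ edist u v :=
  hausdorffEdist_le_of_infEdist (fun _ hx => stmt10_infEdist_cs_le u v hx)
    (fun _ hx => (stmt10_infEdist_cs_le v u hx).trans (edist_comm v u).le)

lemma stmt10_comp_mem (hH2 : ∀ f ∈ H, ∀ g ∈ H, f.trans g ∈ H)
    {u a : C(X, X)} (ha : a ∈ closure (stmt10cs H u)) {h : X ≃ₜ X} (hh : h ∈ H) :
    a.comp (h : C(X, X)) ∈ closure (stmt10cs H u) := by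
  rw [EMetric.mem_closure_iff] at ha ⊢
  intro ε hε
  obtain ⟨b, ⟨h₂, hh₂, rfl⟩, hb⟩ := ha ε hε
  refine ⟨(u.comp (h₂ : C(X, X))).comp (h : C(X, X)),
    ⟨h.trans h₂, hH2 h hh h₂ hh₂, by ext x; rfl⟩, ?_⟩
  exact lt_of_le_of_lt (stmt10_edist_comp_right a (u.comp _) _) hb

lemma stmt10_cs_eq_of_mem (hH2 : ∀ f ∈ H, ∀ g ∈ H, f.trans g ∈ H)
    (hH3 : ∀ f ∈ H, f.symm ∈ H)
    {u a : C(X, X)} (ha : a ∈ closure (stmt10cs H u)) :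
    hausdorffEdist (stmt10cs H a) (stmt10cs H u) = 0 := by
  apply stmt10_eq_zero_of_forall; intro ε hε
  rw [EMetric.mem_closure_iff] at ha
  obtain ⟨b, ⟨h₂, hh₂, rfl⟩, hb⟩ := ha (ENNReal.ofReal ε) (ENNReal.ofReal_pos.2 hε)
  apply hausdorffEdist_le_of_infEdist
  · rintro x ⟨h, hh, rfl⟩
    have hmem : (u.comp (h₂ : C(X, X))).comp (h : C(X, X)) ∈ stmt10cs H u :=
      ⟨h.trans h₂, hH2 h hh h₂ hh₂, by ext x; rfl⟩
    refine le_trans (infEdist_le_edist_of_mem hmem) ?_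
    exact (stmt10_edist_comp_right a _ _).trans hb.le
  · rintro x ⟨h, hh, rfl⟩
    have hmem : a.comp ((h.trans h₂.symm : X ≃ₜ X) : C(X, X)) ∈ stmt10cs H a :=
      ⟨h.trans h₂.symm, hH2 h hh h₂.symm (hH3 h₂ hh₂), rfl⟩
    refine le_trans (infEdist_le_edist_of_mem hmem) ?_
    have he : u.comp (h : C(X, X)) =
        (u.comp (h₂ : C(X, X))).comp ((h.trans h₂.symm : X ≃ₜ X) : C(X, X)) := by
      ext x; simp
    rw [he]
    exact (stmt10_edist_comp_right _ a _).trans (by rw [edist_comm]; exact hb.le)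

lemma stmt10_comp_mem_gsbar (hG2 : ∀ f ∈ G, ∀ g ∈ G, f.trans g ∈ G) (hHG : H ⊆ G)
    {f : C(X, X)} (hf : f ∈ closure (stmt10gs G)) {h : X ≃ₜ X} (hh : h ∈ H) :
    f.comp (h : C(X, X)) ∈ closure (stmt10gs G) := by
  rw [EMetric.mem_closure_iff] at hf ⊢
  intro ε hε
  obtain ⟨b, ⟨g, hg, rfl⟩, hb⟩ := hf ε hε
  refine ⟨((h.trans g : X ≃ₜ X) : C(X, X)), ⟨h.trans g, hG2 h (hHG hh) g hg, rfl⟩, ?_⟩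
  have he : ((h.trans g : X ≃ₜ X) : C(X, X)) = (g : C(X, X)).comp (h : C(X, X)) := by
    ext x; rfl
  rw [he]
  exact lt_of_le_of_lt (stmt10_edist_comp_right f _ _) hb

lemma stmt10_infEdist_right_le
    (hG3 : ∀ f ∈ G, f.symm ∈ G)
    (hnorm : ∀ g ∈ G, ∀ h ∈ H, (g.symm.trans h).trans g ∈ H)
    (u v q : C(X, X)) (hq : q ∈ closure (stmt10gs G)) {x : C(X, X)}
    (hx : x ∈ stmt10cs H (u.comp q)) :
    infEdist x (stmt10cs H (v.comp q)) ≤ hausdorffEdist (stmt10cs H u) (stmt10cs H v) := by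
  apply stmt10_ennreal_le_of_forall; intro ε hε
  rcases eq_top_or_lt_top (hausdorffEdist (stmt10cs H u) (stmt10cs H v)) with htop | hDlt
  · rw [htop, top_add]; exact le_top
  obtain ⟨h, hh, rfl⟩ := hx
  obtain ⟨δu, hδu, hu⟩ := stmt10_unif u (show (0:ℝ) < ε/4 by positivity)
  obtain ⟨δv, hδv, hv⟩ := stmt10_unif v (show (0:ℝ) < ε/4 by positivity)
  obtain ⟨b, ⟨g, hg, rfl⟩, hqg⟩ := Metric.mem_closure_iff.1 hq (min δu δv) (lt_min hδu hδv)
  have hpoint : ∀ y : X, dist (q y) (g y) < min δu δv := fun y =>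
    (ContinuousMap.dist_apply_le_dist y).trans_lt hqg
  have hh₁ : (g.symm.trans h).trans g ∈ H := hnorm g hg h hh
  have hstep : hausdorffEdist (stmt10cs H u) (stmt10cs H v) <
      hausdorffEdist (stmt10cs H u) (stmt10cs H v) + ENNReal.ofReal (ε/4) :=
    ENNReal.lt_add_right hDlt.ne (ENNReal.ofReal_pos.2 (by positivity)).ne'
  have hmem1 : u.comp (((g.symm.trans h).trans g : X ≃ₜ X) : C(X, X)) ∈ stmt10cs H u :=
    ⟨(g.symm.trans h).trans g, hh₁, rfl⟩
  obtain ⟨w, ⟨h₂, hh₂, rfl⟩, hw⟩ := exists_edist_lt_of_hausdorffEdist_lt hmem1 hstep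
  have hh₃ : (g.trans h₂).trans g.symm ∈ H := by
    simpa using hnorm g.symm (hG3 g hg) h₂ hh₂
  have e1 : edist ((u.comp q).comp (h : C(X, X))) ((u.comp (g : C(X, X))).comp (h : C(X, X))) ≤
      ENNReal.ofReal (ε/4) := by
    rw [edist_le_ofReal (by positivity)]
    refine (ContinuousMap.dist_le (by positivity)).2 fun y => ?_
    simp only [ContinuousMap.comp_apply]
    exact (hu _ _ ((hpoint _).trans_le (min_le_left _ _))).le
  have e2 : (u.comp (g : C(X, X))).comp (h : C(X, X)) =
      (u.comp (((g.symm.trans h).trans g : X ≃ₜ X) : C(X, X))).comp (g : C(X, X)) := by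
    ext y; simp
  have e3 : edist ((u.comp (((g.symm.trans h).trans g : X ≃ₜ X) : C(X, X))).comp (g : C(X, X)))
      ((v.comp (h₂ : C(X, X))).comp (g : C(X, X))) ≤
      hausdorffEdist (stmt10cs H u) (stmt10cs H v) + ENNReal.ofReal (ε/4) :=
    (stmt10_edist_comp_right _ _ _).trans hw.le
  have e4 : (v.comp (h₂ : C(X, X))).comp (g : C(X, X)) =
      (v.comp (g : C(X, X))).comp (((g.trans h₂).trans g.symm : X ≃ₜ X) : C(X, X)) := by
    ext y; simp
  have e5 : edist ((v.comp (g : C(X, X))).comp (((g.trans h₂).trans g.symm : X ≃ₜ X) : C(X, X)))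
      ((v.comp q).comp (((g.trans h₂).trans g.symm : X ≃ₜ X) : C(X, X))) ≤
      ENNReal.ofReal (ε/4) := by
    rw [edist_le_ofReal (by positivity)]
    refine (ContinuousMap.dist_le (by positivity)).2 fun y => ?_
    simp only [ContinuousMap.comp_apply]
    refine (hv _ _ ?_).le
    rw [dist_comm]
    exact (hpoint _).trans_le (min_le_right _ _)
  calc infEdist ((u.comp q).comp (h : C(X, X))) (stmt10cs H (v.comp q))
      ≤ edist ((u.comp q).comp (h : C(X, X)))
        ((v.comp q).comp (((g.trans h₂).trans g.symm : X ≃ₜ X) : C(X, X))) :=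
        infEdist_le_edist_of_mem
          (show (v.comp q).comp (((g.trans h₂).trans g.symm : X ≃ₜ X) : C(X, X)) ∈
            stmt10cs H (v.comp q) from ⟨_, hh₃, rfl⟩)
    _ ≤ edist ((u.comp q).comp (h : C(X, X))) ((u.comp (g : C(X, X))).comp (h : C(X, X))) +
        edist ((u.comp (g : C(X, X))).comp (h : C(X, X)))
          ((v.comp (h₂ : C(X, X))).comp (g : C(X, X))) +
        edist ((v.comp (h₂ : C(X, X))).comp (g : C(X, X)))
          ((v.comp q).comp (((g.trans h₂).trans g.symm : X ≃ₜ X) : C(X, X))) :=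
        edist_triangle4 _ _ _ _
    _ ≤ ENNReal.ofReal (ε/4) +
        (hausdorffEdist (stmt10cs H u) (stmt10cs H v) + ENNReal.ofReal (ε/4)) +
        ENNReal.ofReal (ε/4) := by
        refine add_le_add (add_le_add e1 ?_) ?_
        · rw [e2]; exact e3
        · rw [e4]; exact e5
    _ = hausdorffEdist (stmt10cs H u) (stmt10cs H v) +
        (ENNReal.ofReal (ε/4) + ENNReal.ofReal (ε/4) + ENNReal.ofReal (ε/4)) := by ring
    _ ≤ hausdorffEdist (stmt10cs H u) (stmt10cs H v) + ENNReal.ofReal ε := by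
        refine add_le_add_right ?_ _
        rw [← ENNReal.ofReal_add (by positivity) (by positivity),
          ← ENNReal.ofReal_add (by positivity) (by positivity)]
        exact ENNReal.ofReal_le_ofReal (by linarith)

lemma stmt10_hd_right_le
    (hG3 : ∀ f ∈ G, f.symm ∈ G)
    (hnorm : ∀ g ∈ G, ∀ h ∈ H, (g.symm.trans h).trans g ∈ H)
    (u v q : C(X, X)) (hq : q ∈ closure (stmt10gs G)) :
    hausdorffEdist (stmt10cs H (u.comp q)) (stmt10cs H (v.comp q)) ≤
      hausdorffEdist (stmt10cs H u) (stmt10cs H v) :=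
  hausdorffEdist_le_of_infEdist
    (fun _ hx => stmt10_infEdist_right_le hG3 hnorm u v q hq hx)
    (fun _ hx => (stmt10_infEdist_right_le hG3 hnorm v u q hq hx).trans
      hausdorffEdist_comm.le)

lemma stmt10_left_inf (p u v : C(X, X)) {δ ε : ℝ} (hε : 0 ≤ ε)
    (hp : ∀ a b : X, dist a b < δ → dist (p a) (p b) < ε)
    (h : hausdorffEdist (stmt10cs H u) (stmt10cs H v) < ENNReal.ofReal δ) {x : C(X, X)}
    (hx : x ∈ stmt10cs H (p.comp u)) :
    infEdist x (stmt10cs H (p.comp v)) ≤ ENNReal.ofReal ε := by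
  obtain ⟨h₀, hh₀, rfl⟩ := hx
  have hmem0 : u.comp (h₀ : C(X, X)) ∈ stmt10cs H u := ⟨h₀, hh₀, rfl⟩
  obtain ⟨w, ⟨h₂, hh₂, rfl⟩, hw⟩ := exists_edist_lt_of_hausdorffEdist_lt hmem0 h
  have hd : dist (u.comp (h₀ : C(X, X))) (v.comp (h₂ : C(X, X))) < δ := edist_lt_ofReal.1 hw
  have hmem2 : (p.comp v).comp (h₂ : C(X, X)) ∈ stmt10cs H (p.comp v) := ⟨h₂, hh₂, rfl⟩
  refine le_trans (infEdist_le_edist_of_mem hmem2) ?_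
  rw [edist_le_ofReal hε]
  refine (ContinuousMap.dist_le hε).2 fun y => ?_
  simp only [ContinuousMap.comp_apply]
  exact (hp _ _ ((ContinuousMap.dist_apply_le_dist y).trans_lt hd)).le

lemma stmt10_left_hd (p u v : C(X, X)) {δ ε : ℝ} (hε : 0 ≤ ε)
    (hp : ∀ a b : X, dist a b < δ → dist (p a) (p b) < ε)
    (h : hausdorffEdist (stmt10cs H u) (stmt10cs H v) < ENNReal.ofReal δ) :
    hausdorffEdist (stmt10cs H (p.comp u)) (stmt10cs H (p.comp v)) ≤ ENNReal.ofReal ε :=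
  hausdorffEdist_le_of_infEdist
    (fun _ hx => stmt10_left_inf p u v hε hp h hx)
    (fun _ hx => stmt10_left_inf p v u hε hp (by rw [stmt10_hd_eq] at h ⊢; rwa [hausdorffEdist_comm] at h) hx)

lemma stmt10_limit_coset (hH1 : Homeomorph.refl X ∈ H)
    (hH2 : ∀ f ∈ H, ∀ g ∈ H, f.trans g ∈ H) (hH3 : ∀ f ∈ H, f.symm ∈ H)
    (Fn : ℕ → C(X, X)) (A : Set C(X, X)) (hA : IsClosed A)
    (ht : ∀ ε : ℝ≥0∞, 0 < ε → ∃ N, ∀ n ≥ N,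
      hausdorffEdist (closure (stmt10cs H (Fn n))) A < ε)
    {f : C(X, X)} (hf : f ∈ A) : closure (stmt10cs H f) = A := by
  apply le_antisymm
  · refine closure_minimal ?_ hA
    rintro x ⟨h, hh, rfl⟩
    rw [EMetric.mem_iff_infEdist_zero_of_closed hA]
    apply stmt10_eq_zero_of_forall; intro ε hε
    obtain ⟨N, hN⟩ := ht (ENNReal.ofReal (ε/2)) (ENNReal.ofReal_pos.2 (by positivity))
    have hN' := hN N le_rfl
    obtain ⟨a, haM, hfa⟩ := exists_edist_lt_of_hausdorffEdist_lt hf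
      (by rwa [stmt10_hd_eq, hausdorffEdist_comm] at hN')
    have hah : a.comp (h : C(X, X)) ∈ closure (stmt10cs H (Fn N)) :=
      stmt10_comp_mem hH2 haM hh
    calc infEdist (f.comp (h : C(X, X))) A
        ≤ edist (f.comp (h : C(X, X))) (a.comp (h : C(X, X))) +
          infEdist (a.comp (h : C(X, X))) A := infEdist_le_edist_add_infEdist
      _ ≤ edist f a + hausdorffEdist (closure (stmt10cs H (Fn N))) A :=
          add_le_add (stmt10_edist_comp_right f a _)
            (infEdist_le_hausdorffEdist_of_mem hah)
      _ ≤ ENNReal.ofReal (ε/2) + ENNReal.ofReal (ε/2) := add_le_add hfa.le hN'.le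
      _ = ENNReal.ofReal ε := by
          rw [← ENNReal.ofReal_add (by positivity) (by positivity)]; norm_num
  · intro a ha
    rw [EMetric.mem_closure_iff_infEdist_zero]
    apply stmt10_eq_zero_of_forall; intro ε hε
    obtain ⟨N, hN⟩ := ht (ENNReal.ofReal (ε/2)) (ENNReal.ofReal_pos.2 (by positivity))
    have hN' := hN N le_rfl
    obtain ⟨b, hbM, hab⟩ := exists_edist_lt_of_hausdorffEdist_lt ha
      (by rwa [stmt10_hd_eq, hausdorffEdist_comm] at hN')
    obtain ⟨c, hcM, hfc⟩ := exists_edist_lt_of_hausdorffEdist_lt hf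
      (by rwa [stmt10_hd_eq, hausdorffEdist_comm] at hN')
    have h1 : closure (stmt10cs H b) = closure (stmt10cs H (Fn N)) :=
      hausdorffEdist_zero_iff_closure_eq_closure.1 (stmt10_cs_eq_of_mem hH2 hH3 hbM)
    have h2 : closure (stmt10cs H c) = closure (stmt10cs H (Fn N)) :=
      hausdorffEdist_zero_iff_closure_eq_closure.1 (stmt10_cs_eq_of_mem hH2 hH3 hcM)
    have hbc : b ∈ closure (stmt10cs H c) := by
      rw [h2, ← h1]
      refine subset_closure ?_
      exact ⟨Homeomorph.refl X, hH1, by ext y; rfl⟩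
    calc infEdist a (stmt10cs H f)
        ≤ edist a b + infEdist b (stmt10cs H f) := infEdist_le_edist_add_infEdist
      _ ≤ edist a b + (infEdist b (stmt10cs H c) +
          hausdorffEdist (stmt10cs H c) (stmt10cs H f)) :=
          add_le_add_right infEdist_le_infEdist_add_hausdorffEdist _
      _ = edist a b + hausdorffEdist (stmt10cs H c) (stmt10cs H f) := by
          rw [stmt10_ie_eq, EMetric.mem_closure_iff_infEdist_zero.1 hbc, zero_add]
      _ ≤ edist a b + edist c f := add_le_add_right (stmt10_hd_cs_le_edist c f) _
      _ ≤ ENNReal.ofReal (ε/2) + ENNReal.ofReal (ε/2) :=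
          add_le_add hab.le (by rw [edist_comm]; exact hfc.le)
      _ = ENNReal.ofReal ε := by
          rw [← ENNReal.ofReal_add (by positivity) (by positivity)]; norm_num

end Stmt10Aux

open EMetric in
/-- With `X` compact metric, `G` a group of homeomorphisms of `X`,
`H ⊴ G`, consider the monoid of cosets `closure(fH)`, `f ∈ closure(G)`, with
Hausdorff metric `D`.  On its group of invertible elements inversion is continuous,
and the metric `D'(closure(fH),closure(gH)) = D(closure(fH),closure(gH)) +
D(closure(fH)⁻¹,closure(gH)⁻¹)` is complete, so this group is a completely
metrizable topological group. -/
theorem stmt10 {X : Type*} [MetricSpace X] [CompactSpace X]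
    (G H : Set (X ≃ₜ X))
    (hG1 : Homeomorph.refl X ∈ G) (hG2 : ∀ f ∈ G, ∀ g ∈ G, f.trans g ∈ G)
    (hG3 : ∀ f ∈ G, f.symm ∈ G) (hHG : H ⊆ G)
    (hH1 : Homeomorph.refl X ∈ H) (hH2 : ∀ f ∈ H, ∀ g ∈ H, f.trans g ∈ H)
    (hH3 : ∀ f ∈ H, f.symm ∈ H)
    (hnorm : ∀ g ∈ G, ∀ h ∈ H, (g.symm.trans h).trans g ∈ H) :
    let m : C(X, X) → Set C(X, X) :=
      fun f => closure {q : C(X, X) | ∃ h ∈ H, q = f.comp (h : C(X, X))}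
    let Gbar : Set C(X, X) := closure {q : C(X, X) | ∃ g ∈ G, q = (g : C(X, X))}
    -- `f, p` represent mutually inverse cosets
    let InvPair : C(X, X) → C(X, X) → Prop := fun f p =>
      f ∈ Gbar ∧ p ∈ Gbar ∧ m (f.comp p) = m (ContinuousMap.id X) ∧
        m (p.comp f) = m (ContinuousMap.id X)
    -- inversion is continuous on the group of invertible cosets
    (∀ f p : C(X, X), InvPair f p → ∀ ε : ℝ, 0 < ε → ∃ δ : ℝ, 0 < δ ∧
      ∀ f' p' : C(X, X), InvPair f' p' →
        hausdorffEdist (m f') (m f) < ENNReal.ofReal δ →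
        hausdorffEdist (m p') (m p) < ENNReal.ofReal ε) ∧
    -- completeness of the metric `D'`: any sequence of invertible cosets that is
    -- Cauchy for `D'` converges to an invertible coset
    (∀ F P : ℕ → C(X, X), (∀ n, InvPair (F n) (P n)) →
      (∀ ε : ℝ, 0 < ε → ∃ N : ℕ, ∀ a ≥ N, ∀ b ≥ N,
        hausdorffEdist (m (F a)) (m (F b)) +
          hausdorffEdist (m (P a)) (m (P b)) < ENNReal.ofReal ε) →
      ∃ f p : C(X, X), InvPair f p ∧
        Filter.Tendsto (fun n =>
          hausdorffEdist (m (F n)) (m f) + hausdorffEdist (m (P n)) (m p))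
          Filter.atTop (nhds 0)) := by
  intro m Gbar InvPair
  have hm : ∀ f : C(X, X), m f = closure (stmt10cs H f) := fun _ => rfl
  have hGb : Gbar = closure (stmt10gs G) := rfl
  have hDm : ∀ u v : C(X, X),
      hausdorffEdist (m u) (m v) = hausdorffEdist (stmt10cs H u) (stmt10cs H v) :=
    fun u v => by rw [hm, hm, stmt10_hd_eq, stmt10_hd_eq, hausdorffEdist_closure]
  have hzero : ∀ u v : C(X, X),
      m u = m v ↔ hausdorffEdist (stmt10cs H u) (stmt10cs H v) = 0 := fun u v => by
    rw [hm, hm]; exact hausdorffEdist_zero_iff_closure_eq_closure.symm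
  -- left multiplication is well defined on cosets
  have hL3 : ∀ q u v : C(X, X), m u = m v → m (q.comp u) = m (q.comp v) := by
    intro q u v huv
    refine (hzero _ _).2 (stmt10_eq_zero_of_forall fun ε hε => ?_)
    obtain ⟨δ, hδ, hq⟩ := stmt10_unif q hε
    refine stmt10_left_hd q u v hε.le hq ?_
    rw [(hzero u v).1 huv]
    exact ENNReal.ofReal_pos.2 hδ
  -- right multiplication is well defined on cosets
  have hL4 : ∀ u v q : C(X, X), m u = m v → q ∈ Gbar → m (u.comp q) = m (v.comp q) :=
    fun u v q huv hq => (hzero _ _).2 (le_antisymm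
      ((stmt10_hd_right_le hG3 hnorm u v q hq).trans_eq ((hzero u v).1 huv)) zero_le)
  have hsubG : ∀ {f : C(X, X)}, f ∈ Gbar → m f ⊆ Gbar := by
    intro f hf
    rw [hm, hGb]
    refine closure_minimal ?_ isClosed_closure
    rintro x ⟨h, hh, rfl⟩
    exact stmt10_comp_mem_gsbar hG2 hHG hf hh
  constructor
  · -- continuity of inversion
    rintro f p ⟨hfG, hpG, hfp, hpf⟩ ε hε
    obtain ⟨δ, hδ, hp3⟩ := stmt10_unif p (show (0:ℝ) < ε/3 by positivity)
    refine ⟨δ, hδ, ?_⟩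
    rintro f' p' ⟨hf'G, hp'G, hf'p', hp'f'⟩ hff'
    have e1 : m p = m ((p.comp f').comp p') := by
      rw [ContinuousMap.comp_assoc]
      calc m p = m (p.comp (ContinuousMap.id X)) := by rw [ContinuousMap.comp_id]
        _ = m (p.comp (f'.comp p')) := hL3 p _ _ hf'p'.symm
    have e2 : m p' = m ((p.comp f).comp p') := by
      calc m p' = m ((ContinuousMap.id X).comp p') := by rw [ContinuousMap.id_comp]
        _ = m ((p.comp f).comp p') := (hL4 _ _ p' hpf hp'G).symm
    rw [e1, e2, hDm]
    have hcs : hausdorffEdist (stmt10cs H f) (stmt10cs H f') < ENNReal.ofReal δ := by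
      rw [hDm] at hff'
      rw [stmt10_hd_eq] at hff' ⊢; rwa [hausdorffEdist_comm] at hff'
    calc hausdorffEdist (stmt10cs H ((p.comp f).comp p')) (stmt10cs H ((p.comp f').comp p'))
        ≤ hausdorffEdist (stmt10cs H (p.comp f)) (stmt10cs H (p.comp f')) :=
          stmt10_hd_right_le hG3 hnorm _ _ p' hp'G
      _ ≤ ENNReal.ofReal (ε/3) := stmt10_left_hd p f f' (by positivity) hp3 hcs
      _ < ENNReal.ofReal ε := (ENNReal.ofReal_lt_ofReal_iff hε).2 (by linarith)
  · -- completeness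
    intro F P hinv hcau
    have hrε : ∀ ε : ℝ≥0∞, 0 < ε → ∃ r : ℝ, 0 < r ∧ ENNReal.ofReal r ≤ ε := by
      intro ε hε
      rcases eq_or_ne ε ⊤ with rfl | hne
      · exact ⟨1, one_pos, le_top⟩
      · exact ⟨ε.toReal, ENNReal.toReal_pos hε.ne' hne, by rw [ENNReal.ofReal_toReal hne]⟩
    have hmne : ∀ u : C(X, X), (m u).Nonempty := by
      intro u
      have hmem : u.comp ((Homeomorph.refl X : X ≃ₜ X) : C(X, X)) ∈ stmt10cs H u :=
        ⟨Homeomorph.refl X, hH1, rfl⟩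
      exact ⟨_, (hm u) ▸ subset_closure hmem⟩
    -- the sequences of cosets, as closed sets
    let AF : ℕ → TopologicalSpace.Closeds C(X, X) := fun n => ⟨m (F n), isClosed_closure⟩
    let AP : ℕ → TopologicalSpace.Closeds C(X, X) := fun n => ⟨m (P n), isClosed_closure⟩
    have hAFc : ∀ n, (AF n : Set C(X, X)) = m (F n) := fun n => rfl
    have hAPc : ∀ n, (AP n : Set C(X, X)) = m (P n) := fun n => rfl
    have hcF : CauchySeq AF := by
      rw [EMetric.cauchySeq_iff]
      intro ε hε
      obtain ⟨r, hr, hrle⟩ := hrε ε hε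
      obtain ⟨N, hN⟩ := hcau r hr
      refine ⟨N, fun a ha b hb => ?_⟩
      calc edist (AF a) (AF b) = hausdorffEdist (m (F a)) (m (F b)) := by
            rw [Closeds.edist_eq, hAFc, hAFc]; rfl
        _ ≤ hausdorffEdist (m (F a)) (m (F b)) + hausdorffEdist (m (P a)) (m (P b)) :=
            self_le_add_right _ _
        _ < ENNReal.ofReal r := hN a ha b hb
        _ ≤ ε := hrle
    have hcP : CauchySeq AP := by
      rw [EMetric.cauchySeq_iff]
      intro ε hε
      obtain ⟨r, hr, hrle⟩ := hrε ε hε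
      obtain ⟨N, hN⟩ := hcau r hr
      refine ⟨N, fun a ha b hb => ?_⟩
      calc edist (AP a) (AP b) = hausdorffEdist (m (P a)) (m (P b)) := by
            rw [Closeds.edist_eq, hAPc, hAPc]; rfl
        _ ≤ hausdorffEdist (m (F a)) (m (F b)) + hausdorffEdist (m (P a)) (m (P b)) :=
            self_le_add_left _ _
        _ < ENNReal.ofReal r := hN a ha b hb
        _ ≤ ε := hrle
    obtain ⟨Af, hAfT⟩ := cauchySeq_tendsto_of_complete hcF
    obtain ⟨Ap, hApT⟩ := cauchySeq_tendsto_of_complete hcP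
    have htF : ∀ ε : ℝ≥0∞, 0 < ε → ∃ N, ∀ n ≥ N,
        hausdorffEdist (m (F n)) (↑Af : Set C(X, X)) < ε := by
      intro ε hε
      obtain ⟨N, hN⟩ := EMetric.tendsto_atTop.1 hAfT ε hε
      refine ⟨N, fun n hn => ?_⟩
      have := hN n hn
      rwa [Closeds.edist_eq, hAFc] at this
    have htP : ∀ ε : ℝ≥0∞, 0 < ε → ∃ N, ∀ n ≥ N,
        hausdorffEdist (m (P n)) (↑Ap : Set C(X, X)) < ε := by
      intro ε hε
      obtain ⟨N, hN⟩ := EMetric.tendsto_atTop.1 hApT ε hε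
      refine ⟨N, fun n hn => ?_⟩
      have := hN n hn
      rwa [Closeds.edist_eq, hAPc] at this
    -- pick representatives of the limit cosets
    have hAfne : (↑Af : Set C(X, X)).Nonempty := by
      obtain ⟨N, hN⟩ := htF 1 zero_lt_one
      exact nonempty_of_hausdorffEdist_ne_top (hmne (F N)) (ne_top_of_lt (hN N le_rfl))
    have hApne : (↑Ap : Set C(X, X)).Nonempty := by
      obtain ⟨N, hN⟩ := htP 1 zero_lt_one
      exact nonempty_of_hausdorffEdist_ne_top (hmne (P N)) (ne_top_of_lt (hN N le_rfl))
    obtain ⟨f, hfA⟩ := hAfne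
    obtain ⟨p, hpA⟩ := hApne
    have hCf : m f = (↑Af : Set C(X, X)) := by
      rw [hm]
      exact stmt10_limit_coset hH1 hH2 hH3 F (↑Af) Af.isClosed
        (by simpa only [hm] using htF) hfA
    have hCp : m p = (↑Ap : Set C(X, X)) := by
      rw [hm]
      exact stmt10_limit_coset hH1 hH2 hH3 P (↑Ap) Ap.isClosed
        (by simpa only [hm] using htP) hpA
    -- the limits lie in `Gbar`
    have hfG : f ∈ Gbar := by
      rw [hGb, EMetric.mem_iff_infEdist_zero_of_closed isClosed_closure]
      apply stmt10_eq_zero_of_forall; intro ε hε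
      obtain ⟨N, hN⟩ := htF (ENNReal.ofReal ε) (ENNReal.ofReal_pos.2 hε)
      obtain ⟨a, haM, hfa⟩ := exists_edist_lt_of_hausdorffEdist_lt hfA
        (by rw [hausdorffEdist_comm]; exact hN N le_rfl)
      have haG : a ∈ closure (stmt10gs G) := by
        rw [← hGb]; exact hsubG (hinv N).1 haM
      exact (infEdist_le_edist_of_mem haG).trans hfa.le
    have hpG : p ∈ Gbar := by
      rw [hGb, EMetric.mem_iff_infEdist_zero_of_closed isClosed_closure]
      apply stmt10_eq_zero_of_forall; intro ε hε
      obtain ⟨N, hN⟩ := htP (ENNReal.ofReal ε) (ENNReal.ofReal_pos.2 hε)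
      obtain ⟨a, haM, hpa⟩ := exists_edist_lt_of_hausdorffEdist_lt hpA
        (by rw [hausdorffEdist_comm]; exact hN N le_rfl)
      have haG : a ∈ closure (stmt10gs G) := by
        rw [← hGb]; exact hsubG (hinv N).2.1 haM
      exact (infEdist_le_edist_of_mem haG).trans hpa.le
    -- convergence of the cosets to `m f` and `m p`
    have htF' : ∀ ε : ℝ≥0∞, 0 < ε → ∃ N, ∀ n ≥ N,
        hausdorffEdist (m (F n)) (m f) < ε := by
      intro ε hε; obtain ⟨N, hN⟩ := htF ε hε
      exact ⟨N, fun n hn => by rw [hCf]; exact hN n hn⟩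
    have htP' : ∀ ε : ℝ≥0∞, 0 < ε → ∃ N, ∀ n ≥ N,
        hausdorffEdist (m (P n)) (m p) < ε := by
      intro ε hε; obtain ⟨N, hN⟩ := htP ε hε
      exact ⟨N, fun n hn => by rw [hCp]; exact hN n hn⟩
    refine ⟨f, p, ⟨hfG, hpG, ?_, ?_⟩, ?_⟩
    · -- m (f.comp p) = m id
      refine (hzero _ _).2 (stmt10_eq_zero_of_forall fun ε hε => ?_)
      obtain ⟨δ, hδ, hf2⟩ := stmt10_unif f (show (0:ℝ) < ε/2 by positivity)
      obtain ⟨N₁, hN₁⟩ := htP' (ENNReal.ofReal δ) (ENNReal.ofReal_pos.2 hδ)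
      obtain ⟨N₂, hN₂⟩ := htF' (ENNReal.ofReal (ε/2)) (ENNReal.ofReal_pos.2 (by positivity))
      set n := max N₁ N₂ with hn
      have hp' : hausdorffEdist (stmt10cs H p) (stmt10cs H (P n)) < ENNReal.ofReal δ := by
        have := hN₁ n (le_max_left _ _)
        rw [hDm] at this
        rwa [stmt10_hd_eq, hausdorffEdist_comm] at this
      have hf'' : hausdorffEdist (stmt10cs H (F n)) (stmt10cs H f) <
          ENNReal.ofReal (ε/2) := by
        have := hN₂ n (le_max_right _ _)
        rwa [hDm] at this
      calc hausdorffEdist (stmt10cs H (f.comp p)) (stmt10cs H (ContinuousMap.id X))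
          ≤ hausdorffEdist (stmt10cs H (f.comp p)) (stmt10cs H (f.comp (P n))) +
            hausdorffEdist (stmt10cs H (f.comp (P n))) (stmt10cs H (ContinuousMap.id X)) :=
            hausdorffEdist_triangle
        _ ≤ hausdorffEdist (stmt10cs H (f.comp p)) (stmt10cs H (f.comp (P n))) +
            (hausdorffEdist (stmt10cs H (f.comp (P n))) (stmt10cs H ((F n).comp (P n))) +
              hausdorffEdist (stmt10cs H ((F n).comp (P n)))
                (stmt10cs H (ContinuousMap.id X))) :=
            add_le_add_right hausdorffEdist_triangle _
        _ ≤ ENNReal.ofReal (ε/2) + (ENNReal.ofReal (ε/2) + 0) := by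
            refine add_le_add (stmt10_left_hd f p (P n) (by positivity) hf2 hp') ?_
            refine add_le_add ?_ ?_
            · refine (stmt10_hd_right_le hG3 hnorm f (F n) (P n) (hinv n).2.1).trans ?_
              rw [stmt10_hd_eq, hausdorffEdist_comm]
              exact hf''.le
            · exact le_of_eq ((hzero _ _).1 (hinv n).2.2.1)
        _ = ENNReal.ofReal ε := by
            rw [add_zero, ← ENNReal.ofReal_add (by positivity) (by positivity)]; norm_num
    · -- m (p.comp f) = m id
      refine (hzero _ _).2 (stmt10_eq_zero_of_forall fun ε hε => ?_)
      obtain ⟨δ, hδ, hp2⟩ := stmt10_unif p (show (0:ℝ) < ε/2 by positivity)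
      obtain ⟨N₁, hN₁⟩ := htF' (ENNReal.ofReal δ) (ENNReal.ofReal_pos.2 hδ)
      obtain ⟨N₂, hN₂⟩ := htP' (ENNReal.ofReal (ε/2)) (ENNReal.ofReal_pos.2 (by positivity))
      set n := max N₁ N₂ with hn
      have hf' : hausdorffEdist (stmt10cs H f) (stmt10cs H (F n)) < ENNReal.ofReal δ := by
        have := hN₁ n (le_max_left _ _)
        rw [hDm] at this
        rwa [stmt10_hd_eq, hausdorffEdist_comm] at this
      have hp'' : hausdorffEdist (stmt10cs H (P n)) (stmt10cs H p) <
          ENNReal.ofReal (ε/2) := by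
        have := hN₂ n (le_max_right _ _)
        rwa [hDm] at this
      calc hausdorffEdist (stmt10cs H (p.comp f)) (stmt10cs H (ContinuousMap.id X))
          ≤ hausdorffEdist (stmt10cs H (p.comp f)) (stmt10cs H (p.comp (F n))) +
            hausdorffEdist (stmt10cs H (p.comp (F n))) (stmt10cs H (ContinuousMap.id X)) :=
            hausdorffEdist_triangle
        _ ≤ hausdorffEdist (stmt10cs H (p.comp f)) (stmt10cs H (p.comp (F n))) +
            (hausdorffEdist (stmt10cs H (p.comp (F n))) (stmt10cs H ((P n).comp (F n))) +
              hausdorffEdist (stmt10cs H ((P n).comp (F n)))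
                (stmt10cs H (ContinuousMap.id X))) :=
            add_le_add_right hausdorffEdist_triangle _
        _ ≤ ENNReal.ofReal (ε/2) + (ENNReal.ofReal (ε/2) + 0) := by
            refine add_le_add (stmt10_left_hd p f (F n) (by positivity) hp2 hf') ?_
            refine add_le_add ?_ ?_
            · refine (stmt10_hd_right_le hG3 hnorm p (P n) (F n) (hinv n).1).trans ?_
              rw [stmt10_hd_eq, hausdorffEdist_comm]
              exact hp''.le
            · exact le_of_eq ((hzero _ _).1 (hinv n).2.2.2)
        _ = ENNReal.ofReal ε := by
            rw [add_zero, ← ENNReal.ofReal_add (by positivity) (by positivity)]; norm_num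
    · -- the convergence statement
      rw [ENNReal.tendsto_atTop_zero]
      intro ε hε
      obtain ⟨r, hr, hrle⟩ := hrε ε hε
      obtain ⟨N₁, hN₁⟩ := htF' (ENNReal.ofReal (r/2)) (ENNReal.ofReal_pos.2 (by positivity))
      obtain ⟨N₂, hN₂⟩ := htP' (ENNReal.ofReal (r/2)) (ENNReal.ofReal_pos.2 (by positivity))
      refine ⟨max N₁ N₂, fun n hn => ?_⟩
      have h1 := hN₁ n (le_trans (le_max_left _ _) hn)
      have h2 := hN₂ n (le_trans (le_max_right _ _) hn)
      calc hausdorffEdist (m (F n)) (m f) + hausdorffEdist (m (P n)) (m p)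
          ≤ ENNReal.ofReal (r/2) + ENNReal.ofReal (r/2) := add_le_add h1.le h2.le
        _ = ENNReal.ofReal r := by
            rw [← ENNReal.ofReal_add (by positivity) (by positivity)]; norm_num
        _ ≤ ε := hrle
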